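/- Let l ≥ 0, L = 2^l, and F = [[1,0],[1,1]] over GF(2), with B_L = F^{⊗l} having rows and columns indexed 1,…,L. Then for every k with 0 ≤ k ≤ l and every j with 0 ≤ j < 2^{l−k}, the 2^k × 2^k submatrix of B_L consisting of rows L − 2^k + 1, …, L and columns j·2^k + 1, …, (j+1)·2^k equals F^{⊗k}. In particular, for i = L + 1 − 2^k the nonzero rows of B̃_L(i) consist of L/2^k identical copies of the invertible matrix F^{⊗k} placed side by side. -/

import Mathlib

/-- The 2×2 polarization kernel `F = [[1,0],[1,1]]` over `GF(2)`. -/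
def polarF : Matrix (Fin 2) (Fin 2) (ZMod 2) := !![1, 0; 1, 1]

/-- `polarB l` is the `l`-fold Kronecker power `F^{⊗l}` of the polarization kernel,
with rows and columns reindexed by `Fin (2^l)` (row-major order), so that
`B_L = B_{L/2} ⊗ F` with `L = 2^l`. -/
def polarB : (l : ℕ) → Matrix (Fin (2 ^ l)) (Fin (2 ^ l)) (ZMod 2)
  | 0 => 1
  | l + 1 =>
      Matrix.reindex (finProdFinEquiv.trans (finCongr (pow_succ 2 l).symm))
        (finProdFinEquiv.trans (finCongr (pow_succ 2 l).symm))
        (Matrix.kroneckerMap (· * ·) (polarB l) polarF)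

/-- `polarBt l i` is the `i`-th polarization submatrix `B̃_L(i)` (with `i` 1-indexed,
`L = 2^l`): the matrix obtained from `B_L` by replacing its first `i - 1` rows with zeros. -/
def polarBt (l : ℕ) (i : ℕ) : Matrix (Fin (2 ^ l)) (Fin (2 ^ l)) (ZMod 2) :=
  Matrix.of fun r c => if i - 1 ≤ r.val then polarB l r c else 0


lemma polarB_twoPowSucc (l : ℕ) : 2 ^ (l+1) = 2 ^ l * 2 := pow_succ 2 l

lemma polarB_succ (l : ℕ) (x y : Fin (2 ^ (l+1))) :
    polarB (l+1) x y =
      polarB l ⟨x.val / 2, by have := x.isLt; have := polarB_twoPowSucc l; omega⟩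
        ⟨y.val / 2, by have := y.isLt; have := polarB_twoPowSucc l; omega⟩ *
      polarF ⟨x.val % 2, Nat.mod_lt _ (by norm_num)⟩ ⟨y.val % 2, Nat.mod_lt _ (by norm_num)⟩ := by
  simp only [polarB, Matrix.reindex_apply, Matrix.submatrix_apply, Equiv.symm_trans_apply,
    Matrix.kroneckerMap_apply]
  rfl

lemma polarF_one_row (b : Fin 2) : polarF 1 b = 1 := by fin_cases b <;> decide

lemma polarB_block : ∀ (l : ℕ) (k : ℕ), k ≤ l → ∀ j, j < 2 ^ (l - k) →
    ∀ (r c : Fin (2 ^ k)) (x y : Fin (2 ^ l)),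
    x.val = 2 ^ l - 2 ^ k + r.val → y.val = j * 2 ^ k + c.val →
    polarB l x y = polarB k r c := by
  intro l
  induction l with
  | zero =>
    intro k hk j hj r c x y hx hy
    interval_cases k
    have := x.isLt; have := y.isLt; have := r.isLt; have := c.isLt
    congr 1 <;> ext <;> omega
  | succ l IH =>
    intro k
    cases k with
    | zero =>
      intro hk j hj r c x y hx hy
      have hxl := x.isLt
      have hyl := y.isLt
      have h2l := polarB_twoPowSucc l
      have hr0 : r.val = 0 := by have := r.isLt; omega
      have hc0 : c.val = 0 := by have := c.isLt; omega
      rw [polarB_succ]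
      have : (⟨x.val % 2, Nat.mod_lt _ (by norm_num)⟩ : Fin 2) = 1 := by
        ext; simp; omega
      rw [this, polarF_one_row, mul_one]
      exact IH 0 (Nat.zero_le l) (y.val / 2) (by simp <;> omega) r c _ _
        (by simp <;> omega) (by simp <;> omega)
    | succ k' =>
      intro hk j hj r c x y hx hy
      have hxl := x.isLt
      have hyl := y.isLt
      have h2l := polarB_twoPowSucc l
      have h2k := polarB_twoPowSucc k'
      have hkl : 2 ^ k' ≤ 2 ^ l := Nat.pow_le_pow_right (by norm_num) (by omega)
      have hrl := r.isLt
      have hcl := c.isLt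
      have hj' : j < 2 ^ (l - k') := by
        have : l + 1 - (k' + 1) = l - k' := by omega
        rwa [this] at hj
      have e : j * 2 ^ (k' + 1) = 2 * (j * 2 ^ k') := by rw [pow_succ]; ring
      have hm : y.val = 2 * (j * 2 ^ k') + c.val := by omega
      rw [polarB_succ, polarB_succ k' r c]
      congr 1
      · exact IH k' (by omega) j hj' ⟨r.val / 2, by omega⟩ ⟨c.val / 2, by omega⟩ _ _
          (by simp <;> omega) (by simp <;> omega)
      · congr 1 <;> ext <;> simp <;> omega

lemma polarB_det (l : ℕ) : (polarB l).det = 1 := by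
  induction l with
  | zero => simp [polarB]
  | succ l IH =>
    have hF : polarF.det = 1 := by decide
    simp only [polarB, Matrix.det_reindex_self]
    rw [Matrix.det_kronecker, IH, hF]
    simp

lemma polarB_isUnit (l : ℕ) : IsUnit (polarB l) :=
  (Matrix.isUnit_iff_isUnit_det _).mpr (by rw [polarB_det]; exact isUnit_one)

/-- For `0 ≤ k ≤ l` and `0 ≤ j < 2^{l-k}`, the `2^k × 2^k` submatrix of
`B_L = F^{⊗l}` (`L = 2^l`) formed by its last `2^k` rows and columns `j·2^k, …, (j+1)·2^k − 1`
(0-indexed) equals `F^{⊗k}`. In particular, for `i = L + 1 − 2^k` the nonzero rows of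
`B̃_L(i)` consist of `L/2^k` side-by-side copies of the invertible matrix `F^{⊗k}`. -/
theorem polarB_block_structure (l : ℕ) :
    (∀ (k : ℕ) (hk : k ≤ l) (j : ℕ) (hj : j < 2 ^ (l - k)) (r c : Fin (2 ^ k)),
        polarB l
          ⟨2 ^ l - 2 ^ k + r.val, by
            have h := Nat.pow_le_pow_right (by norm_num : 1 ≤ 2) hk
            have hrv : 2 ^ l - 2 ^ k + r.val < 2 ^ l - 2 ^ k + 2 ^ k :=
              Nat.add_lt_add_left r.isLt _
            rwa [Nat.sub_add_cancel h] at hrv⟩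
          ⟨j * 2 ^ k + c.val, by
            calc j * 2 ^ k + c.val < j * 2 ^ k + 2 ^ k := Nat.add_lt_add_left c.isLt _
              _ = (j + 1) * 2 ^ k := by ring
              _ ≤ 2 ^ (l - k) * 2 ^ k := Nat.mul_le_mul_right (2 ^ k) hj
              _ = 2 ^ l := by rw [← pow_add]; congr 1; omega⟩
          = polarB k r c) ∧
    ∀ (k : ℕ) (hk : k ≤ l),
      IsUnit (polarB k) ∧
      ∀ (r c : Fin (2 ^ l)) (hr : 2 ^ l - 2 ^ k ≤ r.val),
        polarBt l (2 ^ l + 1 - 2 ^ k) r c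
          = polarB k
              ⟨r.val - (2 ^ l - 2 ^ k), by
                have h := Nat.pow_le_pow_right (by norm_num : 1 ≤ 2) hk
                have h2 := r.isLt
                omega⟩
              ⟨c.val % 2 ^ k, Nat.mod_lt _ (by positivity)⟩ := by
  constructor
  · intro k hk j hj r c
    exact polarB_block l k hk j hj r c _ _ rfl rfl
  · intro k hk
    refine ⟨polarB_isUnit k, ?_⟩
    intro r c hr
    have h1 : (1:ℕ) ≤ 2 ^ k := Nat.one_le_two_pow
    have hkl : 2 ^ k ≤ 2 ^ l := Nat.pow_le_pow_right (by norm_num) hk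
    have hrw : polarBt l (2 ^ l + 1 - 2 ^ k) r c = polarB l r c := by
      simp only [polarBt, Matrix.of_apply]
      rw [if_pos (by omega)]
    rw [hrw]
    have hpow : 2 ^ (l - k) * 2 ^ k = 2 ^ l := by rw [← pow_add]; congr 1; omega
    refine polarB_block l k hk (c.val / 2 ^ k)
      ((Nat.div_lt_iff_lt_mul (by positivity)).mpr (by have := c.isLt; omega)) _ _ r c ?_ ?_
    · simp; omega
    · simp
      exact (Nat.div_add_mod' c.val (2 ^ k)).symm
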